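/- Every Noetherian multiplication ring is a BL-ring; that is, if R is a commutative Noetherian ring such that for all ideals I ⊆ J there exists an ideal K with I = J·K, then the ideals of R satisfy BLR-1 and BLR-2. -/

import Mathlib

/-- Every Noetherian multiplication ring is a BL-ring: if for all ideals `I ≤ J`
there is `K` with `I = J * K`, then the ideals satisfy BLR-1 and BLR-2
(where `I → J = J.colon I`). -/
theorem stmt_2 {R : Type*} [CommRing R] [IsNoetherianRing R]
    (hmul : ∀ I J : Ideal R, I ≤ J → ∃ K : Ideal R, I = J * K) :
    (∀ I J : Ideal R, I ⊓ J = I * (J.colon I)) ∧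
      (∀ I J : Ideal R, J.colon I + I.colon J = ⊤) := by
  constructor
  · intro I J
    apply le_antisymm
    · obtain ⟨K, hK⟩ := hmul (I ⊓ J) I inf_le_left
      have hKle : K ≤ J.colon I := by
        intro y hy
        rw [Submodule.mem_colon]
        intro p hp
        have h1 : p * y ∈ I * K := Ideal.mul_mem_mul hp hy
        rw [← hK] at h1
        simpa [smul_eq_mul, mul_comm] using h1.2
      exact le_trans hK.le (Ideal.mul_mono_right hKle)
    · refine le_inf Ideal.mul_le_left ?_
      rw [Ideal.mul_le]
      intro r hr s hs
      have := (Submodule.mem_colon.mp hs) r hr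
      simpa [smul_eq_mul, mul_comm] using this
  · intro I J
    set A := I + J with hA
    set C := J.colon I + I.colon J with hC
    have hI : I ≤ A * (I.colon J) := by
      obtain ⟨K, hK⟩ := hmul I A le_sup_left
      have hKle : K ≤ I.colon J := by
        intro y hy
        rw [Submodule.mem_colon]
        intro p hp
        have hpA : p ∈ A := Submodule.mem_sup_right hp
        have h1 : p * y ∈ A * K := Ideal.mul_mem_mul hpA hy
        rw [← hK] at h1
        simpa [smul_eq_mul, mul_comm] using h1
      exact le_trans hK.le (Ideal.mul_mono_right hKle)
    have hJ : J ≤ A * (J.colon I) := by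
      obtain ⟨K, hK⟩ := hmul J A le_sup_right
      have hKle : K ≤ J.colon I := by
        intro y hy
        rw [Submodule.mem_colon]
        intro p hp
        have hpA : p ∈ A := Submodule.mem_sup_left hp
        have h1 : p * y ∈ A * K := Ideal.mul_mem_mul hpA hy
        rw [← hK] at h1
        simpa [smul_eq_mul, mul_comm] using h1
      exact le_trans hK.le (Ideal.mul_mono_right hKle)
    have hAC : A ≤ C • A := by
      have h1 : A ≤ A * C := by
        have : A ≤ A * ((I.colon J) + (J.colon I)) := by
          rw [mul_add]
          exact sup_le (le_trans hI le_sup_left) (le_trans hJ le_sup_right)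
        rw [hC]
        rwa [add_comm (J.colon I)]
      rw [Ideal.smul_eq_mul, mul_comm]
      exact h1
    have hfg : A.FG := IsNoetherian.noetherian A
    obtain ⟨r, hr1, hr2⟩ :=
      Submodule.exists_sub_one_mem_and_smul_eq_zero_of_fg_of_le_smul C A hfg hAC
    have hrC : r ∈ C := by
      rw [hC]
      apply Submodule.mem_sup_right
      rw [Submodule.mem_colon]
      intro p hp
      have hpA : p ∈ A := Submodule.mem_sup_right hp
      rw [hr2 p hpA]
      exact I.zero_mem
    have h1C : (1 : R) ∈ C := by
      have := C.sub_mem hrC hr1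
      simpa using this
    rw [Ideal.eq_top_iff_one]
    exact h1C
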